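/- For every real δ and every real p ≥ 2, |1 + δ|^p − 1 − pδ ≥ 2^{-p}·(δ^2 + |δ|^p). -/

import Mathlib

-- B1: quadratic lower bound, valid for all δ
lemma aux_quad (δ p : ℝ) (hp : 2 ≤ p) : 1 + p*δ + (p/2)*δ^2 ≤ |1+δ|^p := by
  have hkey : |1+δ| ^ p = ((1+δ)^2) ^ (p/2) := by
    rw [← sq_abs, ← Real.rpow_natCast |1+δ| 2, ← Real.rpow_mul (abs_nonneg _)]
    congr 1; push_cast; ring
  have hs : (-1 : ℝ) ≤ 2*δ + δ^2 := by nlinarith [sq_nonneg (1+δ)]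
  have hb := one_add_mul_self_le_rpow_one_add hs (by linarith : (1:ℝ) ≤ p/2)
  rw [hkey]
  calc 1 + p*δ + (p/2)*δ^2 = 1 + (p/2) * (2*δ + δ^2) := by ring
  _ ≤ (1 + (2*δ + δ^2))^(p/2) := hb
  _ = ((1+δ)^2)^(p/2) := by ring_nf

/-- For every real `δ` and every real `p ≥ 2`,
`|1 + δ|^p − 1 − pδ ≥ 2^{-p}·(δ² + |δ|^p)`. -/
theorem one_add_pow_sub_linear_lower_bound (δ p : ℝ) (hp : 2 ≤ p) :
    2 ^ (-p) * (δ ^ 2 + |δ| ^ p) ≤ |1 + δ| ^ p - 1 - p * δ := by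
  have hc0 : (0:ℝ) < 2 ^ (-p) := Real.rpow_pos_of_pos two_pos _
  have hc4 : (2:ℝ) ^ (-p) ≤ 1/4 := by
    calc (2:ℝ) ^ (-p) ≤ (2:ℝ) ^ (-2 : ℝ) :=
          Real.rpow_le_rpow_of_exponent_le one_le_two (by linarith)
    _ = 1/4 := by
        rw [show (-2:ℝ) = ((-2 : ℤ) : ℝ) by norm_num, Real.rpow_intCast]; norm_num
  rcases le_or_gt (|δ|) 2 with hd2 | hd2
  · -- |δ| ≤ 2 : use the quadratic bound
    have hq := aux_quad δ p hp
    have habs : |δ| ^ p ≤ 2 ^ (p-2) * δ^2 := by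
      rcases eq_or_ne δ 0 with rfl | hδ0
      · simp [Real.zero_rpow (by positivity : p ≠ 0)]
      · have h0 : (0:ℝ) < |δ| := abs_pos.mpr hδ0
        have : |δ| ^ p = |δ| ^ (p-2) * |δ| ^ (2:ℝ) := by
          rw [← Real.rpow_add h0]; ring_nf
        rw [this]
        have h1 : |δ| ^ (p-2) ≤ 2 ^ (p-2) :=
          Real.rpow_le_rpow (abs_nonneg _) hd2 (by linarith)
        have h2 : |δ| ^ (2:ℝ) = δ^2 := by
          rw [show (2:ℝ) = ((2:ℕ):ℝ) by norm_num, Real.rpow_natCast, sq_abs]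
        rw [h2]
        exact mul_le_mul_of_nonneg_right h1 (sq_nonneg δ)
    have hmul : 2 ^ (-p) * (2 ^ (p-2) : ℝ) = 1/4 := by
      rw [← Real.rpow_add two_pos]
      rw [show -p + (p-2) = (-2:ℝ) by ring,
        show (-2:ℝ) = ((-2 : ℤ) : ℝ) by norm_num, Real.rpow_intCast]; norm_num
    have h1 : 2 ^ (-p) * |δ| ^ p ≤ (1/4) * δ^2 := by
      calc 2 ^ (-p) * |δ| ^ p ≤ 2 ^ (-p) * (2 ^ (p-2) * δ^2) :=
            mul_le_mul_of_nonneg_left habs hc0.le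
      _ = (1/4) * δ^2 := by rw [← mul_assoc, hmul]
    nlinarith [sq_nonneg δ]
  · -- |δ| > 2
    have hδp2 : ∀ t : ℝ, 2 ≤ t → t ^ (2:ℝ) ≤ t ^ p := fun t ht =>
      Real.rpow_le_rpow_of_exponent_le (by linarith) hp
    have hsq : ∀ t : ℝ, 0 ≤ t → t ^ (2:ℝ) = t^2 := fun t ht => by
      rw [show (2:ℝ) = ((2:ℕ):ℝ) by norm_num, Real.rpow_natCast]
    rcases le_or_gt 2 δ with hδ | hδ
    · -- δ ≥ 2
      have h1δ : |1 + δ| = 1 + δ := abs_of_pos (by linarith)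
      have hδ0 : (0:ℝ) < δ := by linarith
      have habs : |δ| = δ := abs_of_pos hδ0
      -- tangent: (1+δ)^p ≥ δ^p + p * δ^p / δ
      have htang : δ^p + p * (δ^p / δ) ≤ (1+δ)^p := by
        have hd0 : (0:ℝ) ≤ 1/δ := by positivity
        have hb := one_add_mul_self_le_rpow_one_add
          (by linarith : (-1:ℝ) ≤ 1/δ) (by linarith : (1:ℝ) ≤ p)
        have : (1+δ)^p = δ^p * (1 + 1/δ)^p := by
          rw [← Real.mul_rpow hδ0.le (by positivity)]
          congr 1; field_simp; ring
        rw [this]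
        calc δ^p + p * (δ^p / δ) = δ^p * (1 + p * (1/δ)) := by field_simp
        _ ≤ δ^p * (1 + 1/δ)^p := by
            apply mul_le_mul_of_nonneg_left hb (Real.rpow_nonneg hδ0.le p)
      have h2 : δ^2 ≤ δ^p := by rw [← hsq δ hδ0.le]; exact hδp2 δ hδ
      have h3 : p * δ ≤ p * (δ^p / δ) := by
        have : δ ≤ δ^p / δ := by
          rw [le_div_iff₀ hδ0]; nlinarith
        nlinarith
      have h4 : (4:ℝ) ≤ δ^2 := by nlinarith
      rw [h1δ, habs]
      nlinarith [mul_le_mul_of_nonneg_right hc4 (sq_nonneg δ),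
        mul_le_mul_of_nonneg_right hc4 (Real.rpow_nonneg hδ0.le p)]
    · -- δ < 2 and |δ| > 2, so δ < -2
      have hδ2 : δ < -2 := by rcases abs_cases δ with ⟨h, _⟩ | ⟨h, _⟩ <;> linarith
      set t : ℝ := -δ with htdef
      have ht2 : 2 < t := by simp [htdef]; linarith
      have ht0 : (0:ℝ) < t := by linarith
      have h1δ : |1 + δ| = t - 1 := by rw [abs_of_neg (by linarith)]; ring
      have habs : |δ| = t := by rw [abs_of_neg (by linarith)]
      have htp2 : t^2 ≤ t^p := by rw [← hsq t ht0.le]; exact hδp2 t ht2.le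
      have h2c : 2 ^ (-p) * t^p = (t/2)^p := by
        rw [Real.div_rpow ht0.le (by norm_num), Real.rpow_neg (by norm_num : (0:ℝ) ≤ 2)]
        ring
      rw [h1δ, habs]
      rcases le_or_gt t 4 with ht4 | ht4
      · -- 2 < t ≤ 4
        have hmono : (t/2)^p ≤ (t-1)^p :=
          Real.rpow_le_rpow (by linarith) (by linarith) (by linarith)
        have hct2 : 2 ^ (-p) * t^2 ≤ (1/4) * t^2 :=
          mul_le_mul_of_nonneg_right hc4 (sq_nonneg t)
        have : (1/4) * t^2 ≤ t := by nlinarith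
        have hpt : 2 * t ≤ p * t := by nlinarith
        have hpd : p * t = -(p * δ) := by rw [htdef]; ring
        have h5 : 2 ^ (-p) * δ^2 = 2 ^ (-p) * t^2 := by
          rw [show δ^2 = t^2 by rw [htdef]; ring]
        nlinarith [h2c ▸ hmono]
      · -- t > 4
        have hmono : (3/4 * t)^p ≤ (t-1)^p :=
          Real.rpow_le_rpow (by linarith) (by linarith) (by linarith)
        have hsplit : (3/4 * t)^p = (3/2)^p * (2 ^ (-p) * t^p) := by
          rw [h2c, ← Real.mul_rpow (by norm_num) (by positivity)]
          congr 1; ring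
        have h32 : (2:ℝ) ≤ (3/2)^p := by
          have h := Real.rpow_le_rpow_of_exponent_le (by norm_num : (1:ℝ) ≤ 3/2) hp
          have : ((3:ℝ)/2) ^ (2:ℝ) = 9/4 := by
            rw [hsq _ (by norm_num)]; norm_num
          linarith
        have hcp : 2 ^ (-p) * t^2 ≤ 2 ^ (-p) * t^p :=
          mul_le_mul_of_nonneg_left htp2 hc0.le
        have htp0 : 0 ≤ 2 ^ (-p) * t^p := by positivity
        have h2tp : 2 * (2 ^ (-p) * t^p) ≤ (t-1)^p := by
          calc 2 * (2 ^ (-p) * t^p) ≤ (3/2)^p * (2 ^ (-p) * t^p) :=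
                mul_le_mul_of_nonneg_right h32 htp0
          _ = (3/4 * t)^p := hsplit.symm
          _ ≤ (t-1)^p := hmono
        have hpt : 2 * t ≤ p * t := by nlinarith
        have hpd : p * t = -(p * δ) := by rw [htdef]; ring
        have h5 : 2 ^ (-p) * δ^2 = 2 ^ (-p) * t^2 := by
          rw [show δ^2 = t^2 by rw [htdef]; ring]
        nlinarith
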